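/- For every integer n ≥ 3, define permutations of {1,…,6n} by σ₀ = (3n−2, 3)(3n−1, 6n−2)(6n−1, 3n+3) · ∏_{i=0}^{n−2} (3i+1, 3i+6)(3i+2, 3n+3i+1)(3n+3i+2, 3n+3i+6), and σ₁ = the product of the 2n 3-cycles (3i+1, 3i+2, 3i+3) for i = 0,…,2n−1. Then σ₀ is a fixed-point-free involution on {1,…,6n}, σ₁³ = 1, and the subgroup generated by σ₀ and σ₁ acts transitively on {1,…,6n}. -/

import Mathlib

namespace NPrismAux

open Equiv

lemma fix_prod (L : List (Equiv.Perm ℕ)) (x : ℕ) (h : ∀ p ∈ L, p x = x) :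
    L.prod x = x := by
  induction L with
  | nil => simp
  | cons p L ih =>
    rw [List.prod_cons, Equiv.Perm.mul_apply,
      ih (fun q hq => h q (List.mem_cons_of_mem _ hq)), h p List.mem_cons_self]

lemma eval_prod (f : ℕ → Equiv.Perm ℕ) (m j x : ℕ) (hj : j < m)
    (hgt : ∀ k, j < k → k < m → f k x = x)
    (hlt : ∀ k, k < j → f k (f j x) = f j x) :
    ((List.range m).map f).prod x = f j x := by
  induction m with
  | zero => omega
  | succ m ih =>
    rw [List.range_succ, List.map_append, List.prod_append]
    simp only [List.map_cons, List.map_nil, List.prod_cons, List.prod_nil, mul_one]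
    rw [Equiv.Perm.mul_apply]
    rcases Nat.lt_or_ge j m with h | h
    · rw [hgt m h (Nat.lt_succ_self m),
        ih h (fun k hk1 hk2 => hgt k hk1 (Nat.lt_succ_of_lt hk2))]
    · have hjm : j = m := by omega
      subst hjm
      exact fix_prod _ _ (by
        intro p hp
        obtain ⟨k, hk, rfl⟩ := List.mem_map.1 hp
        exact hlt k (List.mem_range.1 hk))

lemma eval_prod_fix (f : ℕ → Equiv.Perm ℕ) (m x : ℕ) (h : ∀ k, k < m → f k x = x) :
    ((List.range m).map f).prod x = x := by
  refine fix_prod _ _ ?_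
  intro p hp
  obtain ⟨k, hk, rfl⟩ := List.mem_map.1 hp
  exact h k (List.mem_range.1 hk)

def gg (n i : ℕ) : Equiv.Perm ℕ :=
  Equiv.swap (3 * i + 1) (3 * i + 6) * Equiv.swap (3 * i + 2) (3 * n + 3 * i + 1) *
    Equiv.swap (3 * n + 3 * i + 2) (3 * n + 3 * i + 6)

lemma gg_fix (n i x : ℕ) (h1 : x ≠ 3*i+1) (h2 : x ≠ 3*i+6) (h3 : x ≠ 3*i+2)
    (h4 : x ≠ 3*n+3*i+1) (h5 : x ≠ 3*n+3*i+2) (h6 : x ≠ 3*n+3*i+6) : gg n i x = x := by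
  simp only [gg, Equiv.Perm.mul_apply, Equiv.swap_apply_def]
  split_ifs <;> omega

lemma gg_a (n i : ℕ) (hn : 1 ≤ n) : gg n i (3*i+1) = 3*i+6 := by
  simp only [gg, Equiv.Perm.mul_apply, Equiv.swap_apply_def]
  split_ifs <;> omega

lemma gg_b (n i : ℕ) (hn : 1 ≤ n) : gg n i (3*i+6) = 3*i+1 := by
  simp only [gg, Equiv.Perm.mul_apply, Equiv.swap_apply_def]
  split_ifs <;> omega

lemma gg_c (n i : ℕ) (hn : 1 ≤ n) : gg n i (3*i+2) = 3*n+3*i+1 := by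
  simp only [gg, Equiv.Perm.mul_apply, Equiv.swap_apply_def]
  split_ifs <;> omega

lemma gg_d (n i : ℕ) (hn : 1 ≤ n) : gg n i (3*n+3*i+1) = 3*i+2 := by
  simp only [gg, Equiv.Perm.mul_apply, Equiv.swap_apply_def]
  split_ifs <;> omega

lemma gg_e (n i : ℕ) (hn : 1 ≤ n) : gg n i (3*n+3*i+2) = 3*n+3*i+6 := by
  simp only [gg, Equiv.Perm.mul_apply, Equiv.swap_apply_def]
  split_ifs <;> omega

lemma gg_f (n i : ℕ) (hn : 1 ≤ n) : gg n i (3*n+3*i+6) = 3*n+3*i+2 := by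
  simp only [gg, Equiv.Perm.mul_apply, Equiv.swap_apply_def]
  split_ifs <;> omega

def cc (i : ℕ) : Equiv.Perm ℕ := ([3 * i + 1, 3 * i + 2, 3 * i + 3] : List ℕ).formPerm

lemma cc_1 (i : ℕ) : cc i (3*i+1) = 3*i+2 := by
  simp only [cc, List.formPerm_cons_cons, List.formPerm_singleton, mul_one,
    Equiv.Perm.mul_apply, Equiv.swap_apply_def]
  split_ifs <;> omega

lemma cc_2 (i : ℕ) : cc i (3*i+2) = 3*i+3 := by
  simp only [cc, List.formPerm_cons_cons, List.formPerm_singleton, mul_one,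
    Equiv.Perm.mul_apply, Equiv.swap_apply_def]
  split_ifs <;> omega

lemma cc_3 (i : ℕ) : cc i (3*i+3) = 3*i+1 := by
  simp only [cc, List.formPerm_cons_cons, List.formPerm_singleton, mul_one,
    Equiv.Perm.mul_apply, Equiv.swap_apply_def]
  split_ifs <;> omega

lemma cc_fix (i x : ℕ) (h1 : x ≠ 3*i+1) (h2 : x ≠ 3*i+2) (h3 : x ≠ 3*i+3) : cc i x = x := by
  simp only [cc, List.formPerm_cons_cons, List.formPerm_singleton, mul_one,
    Equiv.Perm.mul_apply, Equiv.swap_apply_def]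
  split_ifs <;> omega

def s0 (n : ℕ) : Equiv.Perm ℕ :=
  Equiv.swap (3 * n - 2) 3 * Equiv.swap (3 * n - 1) (6 * n - 2) *
    Equiv.swap (6 * n - 1) (3 * n + 3) * ((List.range (n - 1)).map (gg n)).prod

def s1p (n : ℕ) : Equiv.Perm ℕ := ((List.range (2 * n)).map cc).prod

lemma s0_1 (n i : ℕ) (hn : 3 ≤ n) (hi : i < n - 1) : s0 n (3*i+1) = 3*i+6 := by
  have hL : ((List.range (n-1)).map (gg n)).prod (3*i+1) = gg n i (3*i+1) := by
    refine eval_prod _ _ i _ hi ?_ ?_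
    · intro k h1 h2
      exact gg_fix n k _ (by omega) (by omega) (by omega) (by omega) (by omega) (by omega)
    · intro k hk
      rw [gg_a n i (by omega)]
      exact gg_fix n k _ (by omega) (by omega) (by omega) (by omega) (by omega) (by omega)
  simp only [s0, Equiv.Perm.mul_apply, hL, gg_a n i (by omega), Equiv.swap_apply_def]
  split_ifs <;> omega

lemma s0_2 (n i : ℕ) (hn : 3 ≤ n) (hi : i < n - 1) : s0 n (3*i+6) = 3*i+1 := by
  have hL : ((List.range (n-1)).map (gg n)).prod (3*i+6) = gg n i (3*i+6) := by
    refine eval_prod _ _ i _ hi ?_ ?_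
    · intro k h1 h2
      exact gg_fix n k _ (by omega) (by omega) (by omega) (by omega) (by omega) (by omega)
    · intro k hk
      rw [gg_b n i (by omega)]
      exact gg_fix n k _ (by omega) (by omega) (by omega) (by omega) (by omega) (by omega)
  simp only [s0, Equiv.Perm.mul_apply, hL, gg_b n i (by omega), Equiv.swap_apply_def]
  split_ifs <;> omega

lemma s0_3 (n i : ℕ) (hn : 3 ≤ n) (hi : i < n - 1) : s0 n (3*i+2) = 3*n+3*i+1 := by
  have hL : ((List.range (n-1)).map (gg n)).prod (3*i+2) = gg n i (3*i+2) := by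
    refine eval_prod _ _ i _ hi ?_ ?_
    · intro k h1 h2
      exact gg_fix n k _ (by omega) (by omega) (by omega) (by omega) (by omega) (by omega)
    · intro k hk
      rw [gg_c n i (by omega)]
      exact gg_fix n k _ (by omega) (by omega) (by omega) (by omega) (by omega) (by omega)
  simp only [s0, Equiv.Perm.mul_apply, hL, gg_c n i (by omega), Equiv.swap_apply_def]
  split_ifs <;> omega

lemma s0_4 (n i : ℕ) (hn : 3 ≤ n) (hi : i < n - 1) : s0 n (3*n+3*i+1) = 3*i+2 := by
  have hL : ((List.range (n-1)).map (gg n)).prod (3*n+3*i+1) = gg n i (3*n+3*i+1) := by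
    refine eval_prod _ _ i _ hi ?_ ?_
    · intro k h1 h2
      exact gg_fix n k _ (by omega) (by omega) (by omega) (by omega) (by omega) (by omega)
    · intro k hk
      rw [gg_d n i (by omega)]
      exact gg_fix n k _ (by omega) (by omega) (by omega) (by omega) (by omega) (by omega)
  simp only [s0, Equiv.Perm.mul_apply, hL, gg_d n i (by omega), Equiv.swap_apply_def]
  split_ifs <;> omega

lemma s0_5 (n i : ℕ) (hn : 3 ≤ n) (hi : i < n - 1) : s0 n (3*n+3*i+2) = 3*n+3*i+6 := by
  have hL : ((List.range (n-1)).map (gg n)).prod (3*n+3*i+2) = gg n i (3*n+3*i+2) := by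
    refine eval_prod _ _ i _ hi ?_ ?_
    · intro k h1 h2
      exact gg_fix n k _ (by omega) (by omega) (by omega) (by omega) (by omega) (by omega)
    · intro k hk
      rw [gg_e n i (by omega)]
      exact gg_fix n k _ (by omega) (by omega) (by omega) (by omega) (by omega) (by omega)
  simp only [s0, Equiv.Perm.mul_apply, hL, gg_e n i (by omega), Equiv.swap_apply_def]
  split_ifs <;> omega

lemma s0_6 (n i : ℕ) (hn : 3 ≤ n) (hi : i < n - 1) : s0 n (3*n+3*i+6) = 3*n+3*i+2 := by
  have hL : ((List.range (n-1)).map (gg n)).prod (3*n+3*i+6) = gg n i (3*n+3*i+6) := by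
    refine eval_prod _ _ i _ hi ?_ ?_
    · intro k h1 h2
      exact gg_fix n k _ (by omega) (by omega) (by omega) (by omega) (by omega) (by omega)
    · intro k hk
      rw [gg_f n i (by omega)]
      exact gg_fix n k _ (by omega) (by omega) (by omega) (by omega) (by omega) (by omega)
  simp only [s0, Equiv.Perm.mul_apply, hL, gg_f n i (by omega), Equiv.swap_apply_def]
  split_ifs <;> omega

lemma s0_7 (n : ℕ) (hn : 3 ≤ n) : s0 n (3*n-2) = 3 := by
  have hL : ((List.range (n-1)).map (gg n)).prod (3*n-2) = 3*n-2 := by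
    refine eval_prod_fix _ _ _ ?_
    intro k hk
    exact gg_fix n k _ (by omega) (by omega) (by omega) (by omega) (by omega) (by omega)
  simp only [s0, Equiv.Perm.mul_apply, hL, Equiv.swap_apply_def]
  split_ifs <;> omega

lemma s0_8 (n : ℕ) (hn : 3 ≤ n) : s0 n 3 = 3*n-2 := by
  have hL : ((List.range (n-1)).map (gg n)).prod 3 = 3 := by
    refine eval_prod_fix _ _ _ ?_
    intro k hk
    exact gg_fix n k _ (by omega) (by omega) (by omega) (by omega) (by omega) (by omega)
  simp only [s0, Equiv.Perm.mul_apply, hL, Equiv.swap_apply_def]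
  split_ifs <;> omega

lemma s0_9 (n : ℕ) (hn : 3 ≤ n) : s0 n (3*n-1) = 6*n-2 := by
  have hL : ((List.range (n-1)).map (gg n)).prod (3*n-1) = 3*n-1 := by
    refine eval_prod_fix _ _ _ ?_
    intro k hk
    exact gg_fix n k _ (by omega) (by omega) (by omega) (by omega) (by omega) (by omega)
  simp only [s0, Equiv.Perm.mul_apply, hL, Equiv.swap_apply_def]
  split_ifs <;> omega

lemma s0_10 (n : ℕ) (hn : 3 ≤ n) : s0 n (6*n-2) = 3*n-1 := by
  have hL : ((List.range (n-1)).map (gg n)).prod (6*n-2) = 6*n-2 := by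
    refine eval_prod_fix _ _ _ ?_
    intro k hk
    exact gg_fix n k _ (by omega) (by omega) (by omega) (by omega) (by omega) (by omega)
  simp only [s0, Equiv.Perm.mul_apply, hL, Equiv.swap_apply_def]
  split_ifs <;> omega

lemma s0_11 (n : ℕ) (hn : 3 ≤ n) : s0 n (6*n-1) = 3*n+3 := by
  have hL : ((List.range (n-1)).map (gg n)).prod (6*n-1) = 6*n-1 := by
    refine eval_prod_fix _ _ _ ?_
    intro k hk
    exact gg_fix n k _ (by omega) (by omega) (by omega) (by omega) (by omega) (by omega)
  simp only [s0, Equiv.Perm.mul_apply, hL, Equiv.swap_apply_def]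
  split_ifs <;> omega

lemma s0_12 (n : ℕ) (hn : 3 ≤ n) : s0 n (3*n+3) = 6*n-1 := by
  have hL : ((List.range (n-1)).map (gg n)).prod (3*n+3) = 3*n+3 := by
    refine eval_prod_fix _ _ _ ?_
    intro k hk
    exact gg_fix n k _ (by omega) (by omega) (by omega) (by omega) (by omega) (by omega)
  simp only [s0, Equiv.Perm.mul_apply, hL, Equiv.swap_apply_def]
  split_ifs <;> omega

lemma s0_fix (n x : ℕ) (hn : 3 ≤ n) (hx : x = 0 ∨ 6*n < x) : s0 n x = x := by
  have hL : ((List.range (n-1)).map (gg n)).prod x = x := by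
    refine eval_prod_fix _ _ _ ?_
    intro k hk
    exact gg_fix n k _ (by omega) (by omega) (by omega) (by omega) (by omega) (by omega)
  simp only [s0, Equiv.Perm.mul_apply, hL, Equiv.swap_apply_def]
  split_ifs <;> omega

lemma s1_1 (n i : ℕ) (hi : i < 2*n) : s1p n (3*i+1) = 3*i+2 := by
  have hL : ((List.range (2*n)).map cc).prod (3*i+1) = cc i (3*i+1) := by
    refine eval_prod _ _ i _ hi ?_ ?_
    · intro k h1 h2
      exact cc_fix k _ (by omega) (by omega) (by omega)
    · intro k hk
      rw [cc_1 i]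
      exact cc_fix k _ (by omega) (by omega) (by omega)
  rw [s1p, hL, cc_1]

lemma s1_2 (n i : ℕ) (hi : i < 2*n) : s1p n (3*i+2) = 3*i+3 := by
  have hL : ((List.range (2*n)).map cc).prod (3*i+2) = cc i (3*i+2) := by
    refine eval_prod _ _ i _ hi ?_ ?_
    · intro k h1 h2
      exact cc_fix k _ (by omega) (by omega) (by omega)
    · intro k hk
      rw [cc_2 i]
      exact cc_fix k _ (by omega) (by omega) (by omega)
  rw [s1p, hL, cc_2]

lemma s1_3 (n i : ℕ) (hi : i < 2*n) : s1p n (3*i+3) = 3*i+1 := by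
  have hL : ((List.range (2*n)).map cc).prod (3*i+3) = cc i (3*i+3) := by
    refine eval_prod _ _ i _ hi ?_ ?_
    · intro k h1 h2
      exact cc_fix k _ (by omega) (by omega) (by omega)
    · intro k hk
      rw [cc_3 i]
      exact cc_fix k _ (by omega) (by omega) (by omega)
  rw [s1p, hL, cc_3]

lemma s1_fix (n x : ℕ) (hx : x = 0 ∨ 6*n < x) : s1p n x = x := by
  refine eval_prod_fix _ _ _ ?_
  intro k hk
  exact cc_fix k _ (by omega) (by omega) (by omega)

end NPrismAux

open NPrismAux in
/-- For every integer `n ≥ 3`, the permutations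
`σ₀ = (3n−2,3)(3n−1,6n−2)(6n−1,3n+3) · ∏_{i=0}^{n−2} (3i+1,3i+6)(3i+2,3n+3i+1)(3n+3i+2,3n+3i+6)`
and `σ₁ = ∏_{i=0}^{2n−1} (3i+1,3i+2,3i+3)` of the `n`-prism satisfy: `σ₀` is a
fixed-point-free involution on `{1,…,6n}`, `σ₁³ = 1`, and the subgroup generated by `σ₀`
and `σ₁` acts transitively on `{1,…,6n}`. -/
theorem n_prism_permutation_representation (n : ℕ) (hn : 3 ≤ n) (σ₀ σ₁ : Equiv.Perm ℕ)
    (hσ₀ : σ₀ = Equiv.swap (3 * n - 2) 3 * Equiv.swap (3 * n - 1) (6 * n - 2) *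
      Equiv.swap (6 * n - 1) (3 * n + 3) *
      ((List.range (n - 1)).map (fun i =>
        Equiv.swap (3 * i + 1) (3 * i + 6) * Equiv.swap (3 * i + 2) (3 * n + 3 * i + 1) *
        Equiv.swap (3 * n + 3 * i + 2) (3 * n + 3 * i + 6))).prod)
    (hσ₁ : σ₁ = ((List.range (2 * n)).map (fun i =>
      ([3 * i + 1, 3 * i + 2, 3 * i + 3] : List ℕ).formPerm)).prod) :
    σ₀ * σ₀ = 1 ∧ (∀ x ∈ Finset.Icc 1 (6 * n), σ₀ x ≠ x) ∧ σ₁ ^ 3 = 1 ∧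
    ∀ a ∈ Finset.Icc 1 (6 * n), ∀ b ∈ Finset.Icc 1 (6 * n),
      ∃ g ∈ Subgroup.closure ({σ₀, σ₁} : Set (Equiv.Perm ℕ)), g a = b := by
  have e0 : σ₀ = s0 n := hσ₀
  have e1 : σ₁ = s1p n := hσ₁
  have hcls : ∀ x, 1 ≤ x → x ≤ 6*n →
      (∃ i, i < n-1 ∧ (x = 3*i+1 ∨ x = 3*i+6 ∨ x = 3*i+2 ∨ x = 3*n+3*i+1 ∨
        x = 3*n+3*i+2 ∨ x = 3*n+3*i+6)) ∨
      x = 3*n-2 ∨ x = 3 ∨ x = 3*n-1 ∨ x = 6*n-2 ∨ x = 6*n-1 ∨ x = 3*n+3 := by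
    intro x h1 h2
    by_cases ha : x = 3*n-2; · tauto
    by_cases hb : x = 3; · tauto
    by_cases hc : x = 3*n-1; · tauto
    by_cases hd : x = 6*n-2; · tauto
    by_cases he : x = 6*n-1; · tauto
    by_cases hf : x = 3*n+3; · tauto
    left
    have h3 : x % 3 = 0 ∨ x % 3 = 1 ∨ x % 3 = 2 := by omega
    rcases Nat.lt_or_ge x (3*n+1) with hx | hx
    · rcases h3 with h3 | h3 | h3
      · exact ⟨(x-6)/3, by omega, by omega⟩
      · exact ⟨(x-1)/3, by omega, by omega⟩
      · exact ⟨(x-2)/3, by omega, by omega⟩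
    · rcases h3 with h3 | h3 | h3
      · exact ⟨(x-(3*n+6))/3, by omega, by omega⟩
      · exact ⟨(x-(3*n+1))/3, by omega, by omega⟩
      · exact ⟨(x-(3*n+2))/3, by omega, by omega⟩
  refine ⟨?_, ?_, ?_, ?_⟩
  · -- σ₀ * σ₀ = 1
    rw [e0]
    ext x
    simp only [Equiv.Perm.mul_apply, Equiv.Perm.one_apply, Equiv.Perm.coe_one, id_eq]
    by_cases hx : 1 ≤ x ∧ x ≤ 6*n
    · rcases hcls x hx.1 hx.2 with ⟨i, hi, h | h | h | h | h | h⟩ | h | h | h | h | h | h <;>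
        subst h
      · rw [s0_1 n i hn hi, s0_2 n i hn hi]
      · rw [s0_2 n i hn hi, s0_1 n i hn hi]
      · rw [s0_3 n i hn hi, s0_4 n i hn hi]
      · rw [s0_4 n i hn hi, s0_3 n i hn hi]
      · rw [s0_5 n i hn hi, s0_6 n i hn hi]
      · rw [s0_6 n i hn hi, s0_5 n i hn hi]
      · rw [s0_7 n hn, s0_8 n hn]
      · rw [s0_8 n hn, s0_7 n hn]
      · rw [s0_9 n hn, s0_10 n hn]
      · rw [s0_10 n hn, s0_9 n hn]
      · rw [s0_11 n hn, s0_12 n hn]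
      · rw [s0_12 n hn, s0_11 n hn]
    · have hx' : x = 0 ∨ 6*n < x := by omega
      rw [s0_fix n x hn hx', s0_fix n x hn hx']
  · -- fixed-point-free
    intro x hx
    simp only [Finset.mem_Icc] at hx
    rw [e0]
    rcases hcls x hx.1 hx.2 with ⟨i, hi, h | h | h | h | h | h⟩ | h | h | h | h | h | h <;>
      subst h
    · rw [s0_1 n i hn hi]; omega
    · rw [s0_2 n i hn hi]; omega
    · rw [s0_3 n i hn hi]; omega
    · rw [s0_4 n i hn hi]; omega
    · rw [s0_5 n i hn hi]; omega
    · rw [s0_6 n i hn hi]; omega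
    · rw [s0_7 n hn]; omega
    · rw [s0_8 n hn]; omega
    · rw [s0_9 n hn]; omega
    · rw [s0_10 n hn]; omega
    · rw [s0_11 n hn]; omega
    · rw [s0_12 n hn]; omega
  · -- σ₁ ^ 3 = 1
    rw [e1]
    ext x
    have hpow : (s1p n ^ 3) x = s1p n (s1p n (s1p n x)) := by
      rw [pow_succ, pow_succ, pow_one]
      simp only [Equiv.Perm.mul_apply]
    rw [hpow]
    simp only [Equiv.Perm.one_apply, Equiv.Perm.coe_one, id_eq]
    by_cases hx : 1 ≤ x ∧ x ≤ 6*n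
    · obtain ⟨i, hi, h⟩ : ∃ i, i < 2*n ∧ (x = 3*i+1 ∨ x = 3*i+2 ∨ x = 3*i+3) :=
        ⟨(x-1)/3, by omega, by omega⟩
      rcases h with h | h | h <;> subst h
      · rw [s1_1 n i hi, s1_2 n i hi, s1_3 n i hi]
      · rw [s1_2 n i hi, s1_3 n i hi, s1_1 n i hi]
      · rw [s1_3 n i hi, s1_1 n i hi, s1_2 n i hi]
    · have hx' : x = 0 ∨ 6*n < x := by omega
      rw [s1_fix n x hx', s1_fix n x hx', s1_fix n x hx']
  · -- transitivity
    intro a ha b hb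
    set G := Subgroup.closure ({σ₀, σ₁} : Set (Equiv.Perm ℕ)) with hG
    have h0G : σ₀ ∈ G := Subgroup.subset_closure (by left; rfl)
    have h1G : σ₁ ∈ G := Subgroup.subset_closure (by right; rfl)
    have reach1 : ∀ i, i < n → ∃ g ∈ G, g 1 = 3*i+1 := by
      intro i
      induction i with
      | zero => exact fun _ => ⟨1, G.one_mem, by simp⟩
      | succ i ih =>
        intro h
        obtain ⟨g, hg, hg1⟩ := ih (by omega)
        refine ⟨σ₁ * σ₀ * g, G.mul_mem (G.mul_mem h1G h0G) hg, ?_⟩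
        simp only [Equiv.Perm.mul_apply, hg1, e0, e1]
        rw [s0_1 n i hn (by omega)]
        have h6 : 3*i+6 = 3*(i+1)+3 := by ring
        rw [h6, s1_3 n (i+1) (by omega)]
    have top : ∀ j, j < 2*n → ∃ g ∈ G, g 1 = 3*j+1 := by
      intro j hj
      rcases Nat.lt_or_ge j n with h | h
      · exact reach1 j h
      · obtain ⟨g, hg, hg1⟩ := reach1 (j-n) (by omega)
        refine ⟨σ₀ * σ₁ * g, G.mul_mem (G.mul_mem h0G h1G) hg, ?_⟩
        simp only [Equiv.Perm.mul_apply, hg1, e0, e1]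
        rw [s1_1 n (j-n) (by omega)]
        rcases Nat.lt_or_ge (j-n) (n-1) with h2 | h2
        · rw [s0_3 n (j-n) hn h2]; omega
        · have hj2 : j - n = n - 1 := by omega
          rw [hj2]
          have h9 : 3*(n-1)+2 = 3*n-1 := by omega
          rw [h9, s0_9 n hn]; omega
    have reach : ∀ x, 1 ≤ x → x ≤ 6*n → ∃ g ∈ G, g 1 = x := by
      intro x h1 h2
      obtain ⟨i, hi, hc⟩ : ∃ i, i < 2*n ∧ (x = 3*i+1 ∨ x = 3*i+2 ∨ x = 3*i+3) :=
        ⟨(x-1)/3, by omega, by omega⟩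
      obtain ⟨g, hg, hg1⟩ := top i hi
      rcases hc with rfl | rfl | rfl
      · exact ⟨g, hg, hg1⟩
      · exact ⟨σ₁ * g, G.mul_mem h1G hg, by
          simp only [Equiv.Perm.mul_apply, hg1, e1]; exact s1_1 n i hi⟩
      · exact ⟨σ₁ * σ₁ * g, G.mul_mem (G.mul_mem h1G h1G) hg, by
          simp only [Equiv.Perm.mul_apply, hg1, e1]; rw [s1_1 n i hi]; exact s1_2 n i hi⟩
    simp only [Finset.mem_Icc] at ha hb
    obtain ⟨ga, hga, hga1⟩ := reach a ha.1 ha.2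
    obtain ⟨gb, hgb, hgb1⟩ := reach b hb.1 hb.2
    refine ⟨gb * ga⁻¹, G.mul_mem hgb (G.inv_mem hga), ?_⟩
    rw [Equiv.Perm.mul_apply, ← hga1, Equiv.Perm.inv_def, Equiv.symm_apply_apply, hgb1]
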